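/- Let ρ be a Sylvester rank function on an additive category with cokernels. If α : A → B is a ρ-full map and β : A → C is any map, then the pushout α' : C → D of α along β is again ρ-full. -/
import Mathlib


open CategoryTheory CategoryTheory.Limits

universe v u

/-- A Sylvester rank function on an additive category with cokernels. -/
structure SylvesterRank (C : Type u) [Category.{v} C] [Preadditive C]
    [HasCokernels C] [HasBinaryBiproducts C] where
  rk : C → ℕ
  rk_iso : ∀ {A B : C}, (A ≅ B) → rk A = rk B
  rk_biprod : ∀ A B : C, rk (A ⊞ B) = rk A + rk B
  rk_coker_le : ∀ {A B : C} (f : A ⟶ B), rk (cokernel f) ≤ rk B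
  rk_le : ∀ {A B : C} (f : A ⟶ B), rk B ≤ rk A + rk (cokernel f)

/-- A map `f : A ⟶ B` is `ρ`-full if `ρ(A) = ρ(B)` and `ρ(coker f) = 0`. -/
def SylvesterRank.IsRhoFull {C : Type u} [Category.{v} C] [Preadditive C]
    [HasCokernels C] [HasBinaryBiproducts C] (ρ : SylvesterRank C)
    {A B : C} (f : A ⟶ B) : Prop :=
  ρ.rk A = ρ.rk B ∧ ρ.rk (cokernel f) = 0

/-- The pushout of `α : A ⟶ B` along `β : A ⟶ C'` is the component
`C' ⟶ coker (α β)` of the canonical map `B ⊞ C' ⟶ coker ((α β) : A ⟶ B ⊞ C')`. -/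
noncomputable def pushoutAlong {C : Type u} [Category.{v} C] [Preadditive C]
    [HasCokernels C] [HasBinaryBiproducts C]
    {A B C' : C} (α : A ⟶ B) (β : A ⟶ C') :
    C' ⟶ cokernel (biprod.lift α β) :=
  biprod.inr ≫ cokernel.π (biprod.lift α β)

section Aux

variable {C : Type u} [Category.{v} C] [Preadditive C]
    [HasCokernels C] [HasBinaryBiproducts C]

/-- The cokernel of an epimorphism is a zero object. -/
lemma isZero_cokernel_of_epi' {X Y : C} (f : X ⟶ Y) [Epi f] :
    IsZero (cokernel f) := by
  rw [IsZero.iff_id_eq_zero]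
  have hπ : cokernel.π f = 0 :=
    zero_of_epi_comp f (by simpa using cokernel.condition f)
  apply coequalizer.hom_ext (f := f) (g := (0 : X ⟶ Y))
  simp [hπ]

/-- A Sylvester rank function vanishes on zero objects. -/
lemma rk_of_isZero (ρ : SylvesterRank C) {Z : C} (hZ : IsZero Z) : ρ.rk Z = 0 := by
  have hZZ : IsZero (Z ⊞ Z) := by rw [biprod_isZero_iff]; exact ⟨hZ, hZ⟩
  have h := ρ.rk_iso (hZ.iso hZZ)
  rw [ρ.rk_biprod] at h
  omega

/-- If `f` factors as an epi onto `Y`, comparing is easy: rank of target is at most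
rank of source when there is an epimorphism between them. -/
lemma rk_le_of_epi (ρ : SylvesterRank C) {X Y : C} (f : X ⟶ Y) [Epi f] :
    ρ.rk Y ≤ ρ.rk X := by
  have h := ρ.rk_le f
  rwa [rk_of_isZero ρ (isZero_cokernel_of_epi' f), add_zero] at h

end Aux

/-- If `α` is `ρ`-full, then the pushout of `α` along any map `β` is `ρ`-full. -/
theorem rhoFull_pushout {C : Type u} [Category.{v} C] [Preadditive C]
    [HasCokernels C] [HasBinaryBiproducts C] (ρ : SylvesterRank C)
    {A B C' : C} (α : A ⟶ B) (β : A ⟶ C')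
    (hα : ρ.IsRhoFull α) :
    ρ.IsRhoFull (pushoutAlong α β) := by
  obtain ⟨h1, h2⟩ := hα
  have hlift : (biprod.lift α β : A ⟶ B ⊞ C') = α ≫ biprod.inl + β ≫ biprod.inr := by
    apply biprod.hom_ext <;> simp
  -- the composite B ⟶ coker (lift α β) ⟶ coker (pushoutAlong α β) kills α
  have hkill : α ≫ (biprod.inl ≫ cokernel.π (biprod.lift α β) ≫
      cokernel.π (pushoutAlong α β)) = 0 := by
    have h0 : (biprod.lift α β) ≫ cokernel.π (biprod.lift α β) ≫
        cokernel.π (pushoutAlong α β) = 0 := by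
      rw [← Category.assoc, cokernel.condition, zero_comp]
    have hβ : β ≫ biprod.inr ≫ cokernel.π (biprod.lift α β) ≫
        cokernel.π (pushoutAlong α β) = 0 := by
      have : biprod.inr ≫ cokernel.π (biprod.lift α β) ≫
          cokernel.π (pushoutAlong α β) = 0 := by
        rw [← Category.assoc]
        exact cokernel.condition (pushoutAlong α β)
      rw [this, comp_zero]
    have hαinl : α ≫ biprod.inl = biprod.lift α β - β ≫ biprod.inr := by
      rw [hlift]; abel
    rw [← Category.assoc, hαinl, Preadditive.sub_comp, Category.assoc, hβ, sub_zero, h0]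
  -- the induced epi coker α ⟶ coker (pushoutAlong α β)
  let ψ : cokernel α ⟶ cokernel (pushoutAlong α β) :=
    cokernel.desc α (biprod.inl ≫ cokernel.π (biprod.lift α β) ≫
      cokernel.π (pushoutAlong α β)) hkill
  have hψepi : Epi ψ := by
    constructor
    intro Z u v huv
    have key : (cokernel.π (biprod.lift α β) ≫ cokernel.π (pushoutAlong α β)) ≫ u
        = (cokernel.π (biprod.lift α β) ≫ cokernel.π (pushoutAlong α β)) ≫ v := by
      apply biprod.hom_ext'
      · have hπψ : cokernel.π α ≫ ψ = biprod.inl ≫ cokernel.π (biprod.lift α β) ≫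
            cokernel.π (pushoutAlong α β) := cokernel.π_desc _ _ _
        have := congrArg (fun t => cokernel.π α ≫ t) huv
        simp only [← Category.assoc, hπψ] at this ⊢
        simpa [Category.assoc] using this
      · have hz : biprod.inr ≫ cokernel.π (biprod.lift α β) ≫
            cokernel.π (pushoutAlong α β) = 0 := by
          rw [← Category.assoc]
          exact cokernel.condition (pushoutAlong α β)
        simp only [← Category.assoc] at hz ⊢
        rw [hz, zero_comp, zero_comp]
    have key2 : cokernel.π (pushoutAlong α β) ≫ u = cokernel.π (pushoutAlong α β) ≫ v := by
      have : Epi (cokernel.π (biprod.lift α β)) := inferInstance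
      simp only [Category.assoc] at key
      exact (cancel_epi (cokernel.π (biprod.lift α β))).mp key
    exact (cancel_epi (cokernel.π (pushoutAlong α β))).mp key2
  -- rank of the cokernel of the pushout is zero
  have hcoker0 : ρ.rk (cokernel (pushoutAlong α β)) = 0 := by
    have := @rk_le_of_epi _ _ _ _ _ ρ _ _ ψ hψepi
    omega
  constructor
  · -- ρ C' = ρ D
    have hle1 : ρ.rk (cokernel (biprod.lift α β)) ≤ ρ.rk C' := by
      have h := ρ.rk_le (pushoutAlong α β)
      omega
    have hle2 : ρ.rk C' ≤ ρ.rk (cokernel (biprod.lift α β)) := by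
      have h := ρ.rk_le (biprod.lift α β)
      rw [ρ.rk_biprod] at h
      omega
    omega
  · exact hcoker0
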